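/- Let A = ξ^{-1}(Ã), B = ξ^{-1}(B̃) for disjoint sets Ã, B̃ ⊂ ℝ^k, let q be the committor of the reversible chain X_n from A to B and q̃ the committor of the effective dynamics from Ã to B̃, with transition rates k_AB = E(q) and k̃_{ÃB̃} = Ẽ(q̃). Then k̃_{ÃB̃} = k_AB + E(q − q̃∘ξ). In particular k̃_{ÃB̃} ≥ k_AB. -/
import Mathlib


open MeasureTheory

open MeasureTheory
set_option linter.unusedSectionVars false

namespace EffRate

variable {α : Type*} [MeasurableSpace α] {μ : Measure α} [SigmaFinite μ]

lemma integrable_of_integral_pos' {f : α → ℝ} (h : (0:ℝ) < ∫ x, f x ∂μ) :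
    Integrable f μ := by
  by_contra hc
  rw [integral_undef hc] at h
  exact lt_irrefl 0 h

variable {p : α → α → ℝ} {π : α → ℝ}

lemma lint_p (hp_pos : ∀ x y, 0 < p x y) (hp_norm : ∀ x, ∫ y, p x y ∂μ = 1) (x : α) :
    ∫⁻ y, ENNReal.ofReal (p x y) ∂μ = 1 := by
  have hint : Integrable (fun y => p x y) μ :=
    integrable_of_integral_pos' (by rw [hp_norm]; exact one_pos)
  rw [← ofReal_integral_eq_lintegral_ofReal hint
    (Filter.Eventually.of_forall fun y => (hp_pos x y).le), hp_norm, ENNReal.ofReal_one]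

lemma lint_pπ (hp_pos : ∀ x y, 0 < p x y) (hπ_pos : ∀ x, 0 < π x)
    (hp_inv : ∀ y, ∫ x, p x y * π x ∂μ = π y) (y : α) :
    ∫⁻ x, ENNReal.ofReal (p x y * π x) ∂μ = ENNReal.ofReal (π y) := by
  have hint : Integrable (fun x => p x y * π x) μ :=
    integrable_of_integral_pos' (by rw [hp_inv]; exact hπ_pos y)
  rw [← ofReal_integral_eq_lintegral_ofReal hint
    (Filter.Eventually.of_forall fun x => (mul_pos (hp_pos x y) (hπ_pos x)).le), hp_inv]

lemma integrableA (hp_meas : Measurable (Function.uncurry p)) (hπ_meas : Measurable π)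
    (hp_pos : ∀ x y, 0 < p x y) (hπ_pos : ∀ x, 0 < π x)
    (hp_norm : ∀ x, ∫ y, p x y ∂μ = 1)
    {F : α → ℝ} (hF_meas : Measurable F) (hF_nn : ∀ x, 0 ≤ F x)
    (hF_int : Integrable (fun x => F x * π x) μ) :
    Integrable (fun z : α × α => p z.1 z.2 * π z.1 * F z.1) (μ.prod μ) := by
  have hPmeas : Measurable fun z : α × α => p z.1 z.2 :=
    hp_meas.comp (measurable_fst.prodMk measurable_snd)
  have hmeas : Measurable fun z : α × α => p z.1 z.2 * π z.1 * F z.1 :=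
    (hPmeas.mul (hπ_meas.comp measurable_fst)).mul (hF_meas.comp measurable_fst)
  refine ⟨hmeas.aestronglyMeasurable, ?_⟩
  rw [hasFiniteIntegral_iff_norm]
  have hnn : ∀ z : α × α, 0 ≤ p z.1 z.2 * π z.1 * F z.1 := fun z =>
    mul_nonneg (mul_nonneg (hp_pos _ _).le (hπ_pos _).le) (hF_nn _)
  have key : ∀ z : α × α, ENNReal.ofReal ‖p z.1 z.2 * π z.1 * F z.1‖
      = ENNReal.ofReal (p z.1 z.2) * ENNReal.ofReal (π z.1 * F z.1) := by
    intro z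
    rw [Real.norm_eq_abs, abs_of_nonneg (hnn z), mul_assoc,
      ENNReal.ofReal_mul (hp_pos _ _).le]
  have hFfin := hF_int.hasFiniteIntegral
  rw [hasFiniteIntegral_iff_norm] at hFfin
  have hcalc : ∫⁻ z : α × α, ENNReal.ofReal ‖p z.1 z.2 * π z.1 * F z.1‖ ∂(μ.prod μ)
      = ∫⁻ x, ENNReal.ofReal ‖F x * π x‖ ∂μ := by
    calc ∫⁻ z : α × α, ENNReal.ofReal ‖p z.1 z.2 * π z.1 * F z.1‖ ∂(μ.prod μ)
        = ∫⁻ z : α × α, ENNReal.ofReal (p z.1 z.2) * ENNReal.ofReal (π z.1 * F z.1)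
            ∂(μ.prod μ) := lintegral_congr key
      _ = ∫⁻ x, ∫⁻ y, ENNReal.ofReal (p x y) * ENNReal.ofReal (π x * F x) ∂μ ∂μ :=
          lintegral_prod _ ((ENNReal.measurable_ofReal.comp hPmeas).mul
            (ENNReal.measurable_ofReal.comp
              ((hπ_meas.comp measurable_fst).mul (hF_meas.comp measurable_fst)))).aemeasurable
      _ = ∫⁻ x, (∫⁻ y, ENNReal.ofReal (p x y) ∂μ) * ENNReal.ofReal (π x * F x) ∂μ := by
          refine lintegral_congr fun x => ?_
          exact lintegral_mul_const _ (ENNReal.measurable_ofReal.comp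
            (hp_meas.comp (measurable_const.prodMk measurable_id)))
      _ = ∫⁻ x, ENNReal.ofReal ‖F x * π x‖ ∂μ := by
          refine lintegral_congr fun x => ?_
          rw [lint_p hp_pos hp_norm x, one_mul, Real.norm_eq_abs,
            abs_of_nonneg (mul_nonneg (hF_nn x) (hπ_pos x).le), mul_comm]
  rw [hcalc]; exact hFfin

lemma integrableB (hp_meas : Measurable (Function.uncurry p)) (hπ_meas : Measurable π)
    (hp_pos : ∀ x y, 0 < p x y) (hπ_pos : ∀ x, 0 < π x)
    (hp_inv : ∀ y, ∫ x, p x y * π x ∂μ = π y)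
    {F : α → ℝ} (hF_meas : Measurable F) (hF_nn : ∀ x, 0 ≤ F x)
    (hF_int : Integrable (fun x => F x * π x) μ) :
    Integrable (fun z : α × α => p z.1 z.2 * π z.1 * F z.2) (μ.prod μ) := by
  have hPmeas : Measurable fun z : α × α => p z.1 z.2 :=
    hp_meas.comp (measurable_fst.prodMk measurable_snd)
  have hmeas : Measurable fun z : α × α => p z.1 z.2 * π z.1 * F z.2 :=
    (hPmeas.mul (hπ_meas.comp measurable_fst)).mul (hF_meas.comp measurable_snd)
  refine ⟨hmeas.aestronglyMeasurable, ?_⟩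
  rw [hasFiniteIntegral_iff_norm]
  have key : ∀ z : α × α, ENNReal.ofReal ‖p z.1 z.2 * π z.1 * F z.2‖
      = ENNReal.ofReal (F z.2) * ENNReal.ofReal (p z.1 z.2 * π z.1) := by
    intro z
    have hnn : 0 ≤ p z.1 z.2 * π z.1 * F z.2 :=
      mul_nonneg (mul_nonneg (hp_pos _ _).le (hπ_pos _).le) (hF_nn _)
    rw [Real.norm_eq_abs, abs_of_nonneg hnn, mul_comm,
      ENNReal.ofReal_mul (hF_nn _)]
  have hFfin := hF_int.hasFiniteIntegral
  rw [hasFiniteIntegral_iff_norm] at hFfin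
  have hcalc : ∫⁻ z : α × α, ENNReal.ofReal ‖p z.1 z.2 * π z.1 * F z.2‖ ∂(μ.prod μ)
      = ∫⁻ y, ENNReal.ofReal ‖F y * π y‖ ∂μ := by
    calc ∫⁻ z : α × α, ENNReal.ofReal ‖p z.1 z.2 * π z.1 * F z.2‖ ∂(μ.prod μ)
        = ∫⁻ z : α × α, ENNReal.ofReal (F z.2) * ENNReal.ofReal (p z.1 z.2 * π z.1)
            ∂(μ.prod μ) := lintegral_congr key
      _ = ∫⁻ y, ∫⁻ x, ENNReal.ofReal (F y) * ENNReal.ofReal (p x y * π x) ∂μ ∂μ :=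
          lintegral_prod_symm _ ((ENNReal.measurable_ofReal.comp (hF_meas.comp measurable_snd)).mul
            (ENNReal.measurable_ofReal.comp
              (hPmeas.mul (hπ_meas.comp measurable_fst)))).aemeasurable
      _ = ∫⁻ y, ENNReal.ofReal (F y) * ∫⁻ x, ENNReal.ofReal (p x y * π x) ∂μ ∂μ := by
          refine lintegral_congr fun y => ?_
          exact lintegral_const_mul _ (ENNReal.measurable_ofReal.comp
            ((hp_meas.comp (measurable_id.prodMk measurable_const)).mul hπ_meas))
      _ = ∫⁻ y, ENNReal.ofReal ‖F y * π y‖ ∂μ := by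
          refine lintegral_congr fun y => ?_
          rw [lint_pπ hp_pos hπ_pos hp_inv y, ← ENNReal.ofReal_mul (hF_nn y),
            Real.norm_eq_abs, abs_of_nonneg (mul_nonneg (hF_nn y) (hπ_pos y).le)]
  rw [hcalc]; exact hFfin


lemma integralA_val (hp_meas : Measurable (Function.uncurry p)) (hπ_meas : Measurable π)
    (hp_pos : ∀ x y, 0 < p x y) (hπ_pos : ∀ x, 0 < π x)
    (hp_norm : ∀ x, ∫ y, p x y ∂μ = 1)
    {F : α → ℝ} (hF_meas : Measurable F) (hF_nn : ∀ x, 0 ≤ F x)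
    (hF_int : Integrable (fun x => F x * π x) μ) :
    ∫ z : α × α, p z.1 z.2 * π z.1 * F z.1 ∂(μ.prod μ) = ∫ x, F x * π x ∂μ := by
  rw [integral_prod _ (integrableA hp_meas hπ_meas hp_pos hπ_pos hp_norm hF_meas hF_nn hF_int)]
  refine integral_congr_ae (Filter.Eventually.of_forall fun x => ?_)
  calc ∫ y, p x y * π x * F x ∂μ = ∫ y, (π x * F x) * p x y ∂μ :=
        integral_congr_ae (Filter.Eventually.of_forall fun y => by ring)
    _ = (π x * F x) * ∫ y, p x y ∂μ := integral_const_mul _ _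
    _ = F x * π x := by rw [hp_norm x]; ring

lemma integralB_val (hp_meas : Measurable (Function.uncurry p)) (hπ_meas : Measurable π)
    (hp_pos : ∀ x y, 0 < p x y) (hπ_pos : ∀ x, 0 < π x)
    (hp_inv : ∀ y, ∫ x, p x y * π x ∂μ = π y)
    {F : α → ℝ} (hF_meas : Measurable F) (hF_nn : ∀ x, 0 ≤ F x)
    (hF_int : Integrable (fun x => F x * π x) μ) :
    ∫ z : α × α, p z.1 z.2 * π z.1 * F z.2 ∂(μ.prod μ) = ∫ y, F y * π y ∂μ := by
  rw [integral_prod_symm _ (integrableB hp_meas hπ_meas hp_pos hπ_pos hp_inv hF_meas hF_nn hF_int)]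
  refine integral_congr_ae (Filter.Eventually.of_forall fun y => ?_)
  calc ∫ x, p x y * π x * F y ∂μ = ∫ x, F y * (p x y * π x) ∂μ :=
        integral_congr_ae (Filter.Eventually.of_forall fun x => by ring)
    _ = F y * ∫ x, p x y * π x ∂μ := integral_const_mul _ _
    _ = F y * π y := by rw [hp_inv y]

lemma integrableC (hp_meas : Measurable (Function.uncurry p)) (hπ_meas : Measurable π)
    (hp_pos : ∀ x y, 0 < p x y) (hπ_pos : ∀ x, 0 < π x)
    (hp_norm : ∀ x, ∫ y, p x y ∂μ = 1)
    (hp_inv : ∀ y, ∫ x, p x y * π x ∂μ = π y)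
    {g h : α → ℝ} (hg : Measurable g) (hh : Measurable h)
    (hg2 : Integrable (fun x => g x ^ 2 * π x) μ)
    (hh2 : Integrable (fun x => h x ^ 2 * π x) μ) :
    Integrable (fun z : α × α => p z.1 z.2 * π z.1 * (g z.1 * h z.2)) (μ.prod μ) := by
  have hA := integrableA hp_meas hπ_meas hp_pos hπ_pos hp_norm
    (F := fun x => g x ^ 2) (hg.pow_const 2) (fun x => sq_nonneg _) hg2
  have hB := integrableB hp_meas hπ_meas hp_pos hπ_pos hp_inv
    (F := fun x => h x ^ 2) (hh.pow_const 2) (fun x => sq_nonneg _) hh2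
  have hPmeas : Measurable fun z : α × α => p z.1 z.2 :=
    hp_meas.comp (measurable_fst.prodMk measurable_snd)
  have hmeas : Measurable fun z : α × α => p z.1 z.2 * π z.1 * (g z.1 * h z.2) :=
    (hPmeas.mul (hπ_meas.comp measurable_fst)).mul
      ((hg.comp measurable_fst).mul (hh.comp measurable_snd))
  refine (hA.add hB).mono' hmeas.aestronglyMeasurable
    (Filter.Eventually.of_forall fun z => ?_)
  have hK : (0:ℝ) ≤ p z.1 z.2 * π z.1 := mul_nonneg (hp_pos _ _).le (hπ_pos _).le
  simp only [Pi.add_apply]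
  rw [Real.norm_eq_abs, abs_mul, abs_of_nonneg hK, abs_mul]
  nlinarith [sq_nonneg (|g z.1| - |h z.2|), sq_abs (g z.1), sq_abs (h z.2),
    abs_nonneg (g z.1), abs_nonneg (h z.2), mul_nonneg (abs_nonneg (g z.1)) (abs_nonneg (h z.2))]

lemma J_symm (hdb : ∀ x y, p x y * π x = p y x * π y) (g h : α → ℝ) :
    ∫ z : α × α, p z.1 z.2 * π z.1 * (g z.1 * h z.2) ∂(μ.prod μ)
      = ∫ z : α × α, p z.1 z.2 * π z.1 * (h z.1 * g z.2) ∂(μ.prod μ) := by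
  rw [← integral_prod_swap (fun z : α × α => p z.1 z.2 * π z.1 * (h z.1 * g z.2))]
  refine integral_congr_ae (Filter.Eventually.of_forall fun z => ?_)
  simp only [Prod.fst_swap, Prod.snd_swap]
  rw [← hdb z.1 z.2]; ring

lemma energy_eq (hp_meas : Measurable (Function.uncurry p)) (hπ_meas : Measurable π)
    (hp_pos : ∀ x y, 0 < p x y) (hπ_pos : ∀ x, 0 < π x)
    (hp_norm : ∀ x, ∫ y, p x y ∂μ = 1)
    (hp_inv : ∀ y, ∫ x, p x y * π x ∂μ = π y)
    {g : α → ℝ} (hg : Measurable g)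
    (hg2 : Integrable (fun x => g x ^ 2 * π x) μ) :
    ∫ x, (g x - ∫ y, p x y * g y ∂μ) * g x * π x ∂μ
      = (∫ x, g x ^ 2 * π x ∂μ)
        - ∫ z : α × α, p z.1 z.2 * π z.1 * (g z.1 * g z.2) ∂(μ.prod μ) := by
  have hC := integrableC hp_meas hπ_meas hp_pos hπ_pos hp_norm hp_inv hg hg hg2 hg2
  have hinner : ∀ x, (∫ y, p x y * g y ∂μ) * g x * π x
      = ∫ y, p x y * π x * (g x * g y) ∂μ := by
    intro x
    calc (∫ y, p x y * g y ∂μ) * g x * π x = (g x * π x) * ∫ y, p x y * g y ∂μ := by ring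
      _ = ∫ y, (g x * π x) * (p x y * g y) ∂μ := (integral_const_mul _ _).symm
      _ = ∫ y, p x y * π x * (g x * g y) ∂μ :=
          integral_congr_ae (Filter.Eventually.of_forall fun y => by ring)
  have hsplit : (fun x => (g x - ∫ y, p x y * g y ∂μ) * g x * π x)
      = fun x => g x ^ 2 * π x - ∫ y, p x y * π x * (g x * g y) ∂μ := by
    funext x; rw [← hinner x]; ring
  rw [hsplit, integral_sub hg2 hC.integral_prod_left, integral_prod _ hC]

lemma energy_nonneg (hp_meas : Measurable (Function.uncurry p)) (hπ_meas : Measurable π)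
    (hp_pos : ∀ x y, 0 < p x y) (hπ_pos : ∀ x, 0 < π x)
    (hp_norm : ∀ x, ∫ y, p x y ∂μ = 1)
    (hp_inv : ∀ y, ∫ x, p x y * π x ∂μ = π y)
    {g : α → ℝ} (hg : Measurable g)
    (hg2 : Integrable (fun x => g x ^ 2 * π x) μ) :
    ∫ z : α × α, p z.1 z.2 * π z.1 * (g z.1 * g z.2) ∂(μ.prod μ)
      ≤ ∫ x, g x ^ 2 * π x ∂μ := by
  have hA : Integrable (fun z : α × α => p z.1 z.2 * π z.1 * g z.1 ^ 2) (μ.prod μ) :=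
    integrableA hp_meas hπ_meas hp_pos hπ_pos hp_norm (F := fun x => g x ^ 2)
      (hg.pow_const 2) (fun _ => sq_nonneg _) hg2
  have hB : Integrable (fun z : α × α => p z.1 z.2 * π z.1 * g z.2 ^ 2) (μ.prod μ) :=
    integrableB hp_meas hπ_meas hp_pos hπ_pos hp_inv (F := fun x => g x ^ 2)
      (hg.pow_const 2) (fun _ => sq_nonneg _) hg2
  have hC : Integrable (fun z : α × α => p z.1 z.2 * π z.1 * (g z.1 * g z.2)) (μ.prod μ) :=
    integrableC hp_meas hπ_meas hp_pos hπ_pos hp_norm hp_inv hg hg hg2 hg2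
  have hAval : ∫ z : α × α, p z.1 z.2 * π z.1 * g z.1 ^ 2 ∂(μ.prod μ)
      = ∫ x, g x ^ 2 * π x ∂μ :=
    integralA_val hp_meas hπ_meas hp_pos hπ_pos hp_norm (F := fun x => g x ^ 2)
      (hg.pow_const 2) (fun _ => sq_nonneg _) hg2
  have hBval : ∫ z : α × α, p z.1 z.2 * π z.1 * g z.2 ^ 2 ∂(μ.prod μ)
      = ∫ x, g x ^ 2 * π x ∂μ :=
    integralB_val hp_meas hπ_meas hp_pos hπ_pos hp_inv (F := fun x => g x ^ 2)
      (hg.pow_const 2) (fun _ => sq_nonneg _) hg2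
  have hpos : 0 ≤ ∫ z : α × α, p z.1 z.2 * π z.1 * (g z.1 - g z.2) ^ 2 ∂(μ.prod μ) :=
    integral_nonneg fun z =>
      mul_nonneg (mul_nonneg (hp_pos _ _).le (hπ_pos _).le) (sq_nonneg _)
  have hexp : ∫ z : α × α, p z.1 z.2 * π z.1 * (g z.1 - g z.2) ^ 2 ∂(μ.prod μ)
      = ((∫ z : α × α, p z.1 z.2 * π z.1 * g z.1 ^ 2 ∂(μ.prod μ))
          + ∫ z : α × α, p z.1 z.2 * π z.1 * g z.2 ^ 2 ∂(μ.prod μ))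
        - 2 * ∫ z : α × α, p z.1 z.2 * π z.1 * (g z.1 * g z.2) ∂(μ.prod μ) := by
    have hfun : (fun z : α × α => p z.1 z.2 * π z.1 * (g z.1 - g z.2) ^ 2)
        = fun z : α × α => (p z.1 z.2 * π z.1 * g z.1 ^ 2 + p z.1 z.2 * π z.1 * g z.2 ^ 2)
            - 2 * (p z.1 z.2 * π z.1 * (g z.1 * g z.2)) := by
      funext z; ring
    have hAB : Integrable (fun z : α × α =>
        p z.1 z.2 * π z.1 * g z.1 ^ 2 + p z.1 z.2 * π z.1 * g z.2 ^ 2) (μ.prod μ) :=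
      hA.add hB
    have hC2 : Integrable (fun z : α × α =>
        2 * (p z.1 z.2 * π z.1 * (g z.1 * g z.2))) (μ.prod μ) := hC.const_mul 2
    rw [hfun, integral_sub hAB hC2, integral_add hA hB, integral_const_mul]
  linarith

end EffRate

/-- For `A = ξ⁻¹(Ã)`, `B = ξ⁻¹(B̃)` with `Ã, B̃` disjoint, let `q` be the
committor of the reversible chain from `A` to `B` and `q̃` the committor of the effective
dynamics from `Ã` to `B̃`. With rates given by the Dirichlet energies, `k_AB = E(q)` and
`k̃_{ÃB̃} = Ẽ(q̃) = E(q̃∘ξ)`, one has `k̃_{ÃB̃} = k_AB + E(q - q̃∘ξ)`; in particular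
`k̃_{ÃB̃} ≥ k_AB`. Here `E(f) = ⟨(I-T)f, f⟩_μ` with `μ(dx) = π(x)dx` and
`(Tf)(x) = ∫ p(x,y) f(y) dy`. -/
theorem effective_rate_decomposition {d k : ℕ}
    (p : (Fin d → ℝ) → (Fin d → ℝ) → ℝ) (π : (Fin d → ℝ) → ℝ)
    (ξ : (Fin d → ℝ) → (Fin k → ℝ)) (hξ_meas : Measurable ξ)
    (At Bt : Set (Fin k → ℝ)) (hAtBt : Disjoint At Bt)
    (hAt : MeasurableSet At) (hBt : MeasurableSet Bt)
    (hABc : ((At ∪ Bt)ᶜ).Nonempty)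
    (hp_meas : Measurable (Function.uncurry p))
    (hπ_meas : Measurable π)
    (hp_pos : ∀ x y, 0 < p x y)
    (hπ_pos : ∀ x, 0 < π x)
    (hπ_prob : ∫ x, π x = 1)
    (hp_norm : ∀ x, ∫ y, p x y = 1)
    (hp_inv : ∀ y, ∫ x, p x y * π x = π y)
    (hdb : ∀ x y, p x y * π x = p y x * π y)
    -- the committor q of the full dynamics from A = ξ⁻¹(Ã) to B = ξ⁻¹(B̃)
    (q : (Fin d → ℝ) → ℝ) (hq_meas : Measurable q)
    (hq2 : Integrable (fun x => q x ^ 2 * π x))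
    (hq_comm : ∀ x, ξ x ∉ At ∪ Bt → (∫ y, p x y * q y) = q x)
    (hqA : ∀ x, ξ x ∈ At → q x = 0) (hqB : ∀ x, ξ x ∈ Bt → q x = 1)
    -- the committor q̃ of the effective dynamics from Ã to B̃ (the minimizer of the
    -- effective Dirichlet energy Ẽ(f̃) = E(f̃∘ξ) subject to the boundary conditions)
    (qt : (Fin k → ℝ) → ℝ) (hqt_meas : Measurable qt)
    (hqt2 : Integrable (fun x => qt (ξ x) ^ 2 * π x))
    (hqtA : ∀ z ∈ At, qt z = 0) (hqtB : ∀ z ∈ Bt, qt z = 1)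
    (hqt_min : ∀ g : (Fin k → ℝ) → ℝ, Measurable g →
      Integrable (fun x => g (ξ x) ^ 2 * π x) →
      (∀ z ∈ At, g z = 0) → (∀ z ∈ Bt, g z = 1) →
      (∫ x, (qt (ξ x) - ∫ y, p x y * qt (ξ y)) * qt (ξ x) * π x)
        ≤ (∫ x, (g (ξ x) - ∫ y, p x y * g (ξ y)) * g (ξ x) * π x)) :
    ((∫ x, (qt (ξ x) - ∫ y, p x y * qt (ξ y)) * qt (ξ x) * π x)
        = (∫ x, (q x - ∫ y, p x y * q y) * q x * π x)
          + (∫ x, ((q x - qt (ξ x)) - ∫ y, p x y * (q y - qt (ξ y)))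
              * (q x - qt (ξ x)) * π x)) ∧
    ((∫ x, (q x - ∫ y, p x y * q y) * q x * π x)
        ≤ (∫ x, (qt (ξ x) - ∫ y, p x y * qt (ξ y)) * qt (ξ x) * π x)) := by
  
  have hf_meas : Measurable (fun x => qt (ξ x)) := hqt_meas.comp hξ_meas
  have hr_meas : Measurable (fun x => q x - qt (ξ x)) := hq_meas.sub hf_meas
  -- integrability of (q - qt∘ξ)² π
  have hr2 : Integrable (fun x => (q x - qt (ξ x)) ^ 2 * π x) := by
    have hbnd : Integrable (fun x => 2 * (q x ^ 2 * π x) + 2 * (qt (ξ x) ^ 2 * π x)) :=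
      (hq2.const_mul 2).add (hqt2.const_mul 2)
    refine hbnd.mono' ((hr_meas.pow_const 2).mul hπ_meas).aestronglyMeasurable
      (Filter.Eventually.of_forall fun x => ?_)
    rw [Real.norm_eq_abs, abs_of_nonneg (mul_nonneg (sq_nonneg _) (hπ_pos x).le)]
    nlinarith [mul_nonneg (sq_nonneg (q x + qt (ξ x))) (hπ_pos x).le]
  -- integrability of q (q - qt∘ξ) π
  have hqr : Integrable (fun x => q x * (q x - qt (ξ x)) * π x) := by
    have hbnd : Integrable (fun x => q x ^ 2 * π x + (q x - qt (ξ x)) ^ 2 * π x) :=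
      hq2.add hr2
    refine hbnd.mono' ((hq_meas.mul hr_meas).mul hπ_meas).aestronglyMeasurable
      (Filter.Eventually.of_forall fun x => ?_)
    rw [Real.norm_eq_abs, abs_mul, abs_of_nonneg (hπ_pos x).le, abs_mul]
    nlinarith [mul_nonneg (sq_nonneg (|q x| - |q x - qt (ξ x)|)) (hπ_pos x).le,
      sq_abs (q x), sq_abs (q x - qt (ξ x)), (hπ_pos x).le]
  -- energy identities
  have hEq : (∫ x, (q x - ∫ y, p x y * q y) * q x * π x)
      = (∫ x, q x ^ 2 * π x)
        - ∫ z : (Fin d → ℝ) × (Fin d → ℝ), p z.1 z.2 * π z.1 * (q z.1 * q z.2)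
            ∂(volume.prod volume) :=
    EffRate.energy_eq hp_meas hπ_meas hp_pos hπ_pos hp_norm hp_inv hq_meas hq2
  have hEf : (∫ x, (qt (ξ x) - ∫ y, p x y * qt (ξ y)) * qt (ξ x) * π x)
      = (∫ x, qt (ξ x) ^ 2 * π x)
        - ∫ z : (Fin d → ℝ) × (Fin d → ℝ), p z.1 z.2 * π z.1 * (qt (ξ z.1) * qt (ξ z.2))
            ∂(volume.prod volume) :=
    EffRate.energy_eq hp_meas hπ_meas hp_pos hπ_pos hp_norm hp_inv hf_meas hqt2
  have hEs : (∫ x, ((q x - qt (ξ x)) - ∫ y, p x y * (q y - qt (ξ y)))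
          * (q x - qt (ξ x)) * π x)
      = (∫ x, (q x - qt (ξ x)) ^ 2 * π x)
        - ∫ z : (Fin d → ℝ) × (Fin d → ℝ),
            p z.1 z.2 * π z.1 * ((q z.1 - qt (ξ z.1)) * (q z.2 - qt (ξ z.2)))
            ∂(volume.prod volume) :=
    EffRate.energy_eq hp_meas hπ_meas hp_pos hπ_pos hp_norm hp_inv hr_meas hr2
  -- product integrabilities
  have hCqq : Integrable (fun z : (Fin d → ℝ) × (Fin d → ℝ) =>
      p z.1 z.2 * π z.1 * (q z.1 * q z.2)) (volume.prod volume) :=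
    EffRate.integrableC hp_meas hπ_meas hp_pos hπ_pos hp_norm hp_inv hq_meas hq_meas hq2 hq2
  have hCqr : Integrable (fun z : (Fin d → ℝ) × (Fin d → ℝ) =>
      p z.1 z.2 * π z.1 * (q z.1 * (q z.2 - qt (ξ z.2)))) (volume.prod volume) :=
    EffRate.integrableC hp_meas hπ_meas hp_pos hπ_pos hp_norm hp_inv hq_meas hr_meas hq2 hr2
  have hCrq : Integrable (fun z : (Fin d → ℝ) × (Fin d → ℝ) =>
      p z.1 z.2 * π z.1 * ((q z.1 - qt (ξ z.1)) * q z.2)) (volume.prod volume) :=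
    EffRate.integrableC hp_meas hπ_meas hp_pos hπ_pos hp_norm hp_inv hr_meas hq_meas hr2 hq2
  have hCrr : Integrable (fun z : (Fin d → ℝ) × (Fin d → ℝ) =>
      p z.1 z.2 * π z.1 * ((q z.1 - qt (ξ z.1)) * (q z.2 - qt (ξ z.2)))) (volume.prod volume) :=
    EffRate.integrableC hp_meas hπ_meas hp_pos hπ_pos hp_norm hp_inv hr_meas hr_meas hr2 hr2
  -- symmetry of the off-diagonal terms
  have hJsymm : ∫ z : (Fin d → ℝ) × (Fin d → ℝ),
        p z.1 z.2 * π z.1 * (q z.1 * (q z.2 - qt (ξ z.2))) ∂(volume.prod volume)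
      = ∫ z : (Fin d → ℝ) × (Fin d → ℝ),
        p z.1 z.2 * π z.1 * ((q z.1 - qt (ξ z.1)) * q z.2) ∂(volume.prod volume) :=
    EffRate.J_symm hdb q (fun x => q x - qt (ξ x))
  -- the cross term equals ∫ q (q - qt∘ξ) π, by harmonicity of q off A ∪ B and
  -- vanishing of q - qt∘ξ on A ∪ B
  have hJrq : ∫ z : (Fin d → ℝ) × (Fin d → ℝ),
        p z.1 z.2 * π z.1 * ((q z.1 - qt (ξ z.1)) * q z.2) ∂(volume.prod volume)
      = ∫ x, q x * (q x - qt (ξ x)) * π x := by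
    rw [MeasureTheory.integral_prod _ hCrq]
    refine integral_congr_ae (Filter.Eventually.of_forall fun x => ?_)
    simp only []
    have h1 : (∫ y, p x y * π x * ((q x - qt (ξ x)) * q y))
        = ((q x - qt (ξ x)) * π x) * ∫ y, p x y * q y := by
      rw [← integral_const_mul]
      exact integral_congr_ae (Filter.Eventually.of_forall fun y => by ring)
    rw [h1]
    by_cases hx : ξ x ∈ At ∪ Bt
    · rcases hx with hA' | hB'
      · rw [hqA x hA', hqtA _ hA']; ring
      · rw [hqB x hB', hqtB _ hB']; ring
    · rw [hq_comm x hx]; ring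
  -- bilinearity: expansion of J(f,f) with f = q - r
  have hJff : ∫ z : (Fin d → ℝ) × (Fin d → ℝ),
        p z.1 z.2 * π z.1 * (qt (ξ z.1) * qt (ξ z.2)) ∂(volume.prod volume)
      = ((∫ z : (Fin d → ℝ) × (Fin d → ℝ), p z.1 z.2 * π z.1 * (q z.1 * q z.2)
            ∂(volume.prod volume))
          + ∫ z : (Fin d → ℝ) × (Fin d → ℝ),
              p z.1 z.2 * π z.1 * ((q z.1 - qt (ξ z.1)) * (q z.2 - qt (ξ z.2)))
              ∂(volume.prod volume))
        - ((∫ z : (Fin d → ℝ) × (Fin d → ℝ),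
              p z.1 z.2 * π z.1 * (q z.1 * (q z.2 - qt (ξ z.2))) ∂(volume.prod volume))
          + ∫ z : (Fin d → ℝ) × (Fin d → ℝ),
              p z.1 z.2 * π z.1 * ((q z.1 - qt (ξ z.1)) * q z.2) ∂(volume.prod volume)) := by
    have hfun : (fun z : (Fin d → ℝ) × (Fin d → ℝ) =>
          p z.1 z.2 * π z.1 * (qt (ξ z.1) * qt (ξ z.2)))
        = fun z => (p z.1 z.2 * π z.1 * (q z.1 * q z.2)
              + p z.1 z.2 * π z.1 * ((q z.1 - qt (ξ z.1)) * (q z.2 - qt (ξ z.2))))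
            - (p z.1 z.2 * π z.1 * (q z.1 * (q z.2 - qt (ξ z.2)))
              + p z.1 z.2 * π z.1 * ((q z.1 - qt (ξ z.1)) * q z.2)) := by
      funext z; ring
    have h1 : Integrable (fun z : (Fin d → ℝ) × (Fin d → ℝ) =>
        p z.1 z.2 * π z.1 * (q z.1 * q z.2)
          + p z.1 z.2 * π z.1 * ((q z.1 - qt (ξ z.1)) * (q z.2 - qt (ξ z.2))))
        (volume.prod volume) := hCqq.add hCrr
    have h2 : Integrable (fun z : (Fin d → ℝ) × (Fin d → ℝ) =>
        p z.1 z.2 * π z.1 * (q z.1 * (q z.2 - qt (ξ z.2)))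
          + p z.1 z.2 * π z.1 * ((q z.1 - qt (ξ z.1)) * q z.2))
        (volume.prod volume) := hCqr.add hCrq
    rw [hfun, integral_sub h1 h2, integral_add hCqq hCrr, integral_add hCqr hCrq]
  -- expansion of ∫ f² π with f = q - r
  have hFv : (∫ x, qt (ξ x) ^ 2 * π x)
      = ((∫ x, q x ^ 2 * π x) + ∫ x, (q x - qt (ξ x)) ^ 2 * π x)
        - 2 * ∫ x, q x * (q x - qt (ξ x)) * π x := by
    have hfun : (fun x => qt (ξ x) ^ 2 * π x)
        = fun x => (q x ^ 2 * π x + (q x - qt (ξ x)) ^ 2 * π x)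
            - 2 * (q x * (q x - qt (ξ x)) * π x) := by
      funext x; ring
    have h1 : Integrable (fun x => q x ^ 2 * π x + (q x - qt (ξ x)) ^ 2 * π x) :=
      hq2.add hr2
    have h2 : Integrable (fun x => 2 * (q x * (q x - qt (ξ x)) * π x)) := hqr.const_mul 2
    rw [hfun, integral_sub h1 h2, integral_add hq2 hr2, integral_const_mul]
  -- nonnegativity of the Dirichlet energy of q - qt∘ξ
  have hJle : ∫ z : (Fin d → ℝ) × (Fin d → ℝ),
        p z.1 z.2 * π z.1 * ((q z.1 - qt (ξ z.1)) * (q z.2 - qt (ξ z.2)))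
        ∂(volume.prod volume)
      ≤ ∫ x, (q x - qt (ξ x)) ^ 2 * π x :=
    EffRate.energy_nonneg hp_meas hπ_meas hp_pos hπ_pos hp_norm hp_inv hr_meas hr2
  constructor
  · linarith
  · linarith
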